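/- (Uniform sets behave randomly for products, two-dimensional corner count) Let X, Y, Z be finite nonempty sets and let S₁ ⊆ Y × Z, S₂ ⊆ X × Z, S₃ ⊆ X × Y. Then |E_{x∈X,y∈Y,z∈Z} 1_{S₁}(y,z)·1_{S₂}(x,z)·1_{S₃}(x,y) − P(S₁)·P(S₂)·P(S₃)| ≤ 8·max over the three sets of ‖1_S − P(S)‖_□, where each box norm is taken over the corresponding product of two sets. -/

import Mathlib

open Finset

/-- The two-dimensional Gowers box norm. -/
noncomputable def boxNorm {X Y : Type*} [Fintype X] [Fintype Y] (f : X → Y → ℝ) : ℝ :=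
  ((∑ x, ∑ x', ∑ y, ∑ y', f x y * f x y' * f x' y * f x' y') /
      ((Fintype.card X : ℝ) ^ 2 * (Fintype.card Y : ℝ) ^ 2)) ^ ((1 : ℝ) / 4)

lemma boxNumer_eq {X Y : Type*} [Fintype X] [Fintype Y] (f : X → Y → ℝ) :
    (∑ x, ∑ x', ∑ y, ∑ y', f x y * f x y' * f x' y * f x' y')
      = ∑ q : Y × Y, (∑ x, f x q.1 * f x q.2) ^ 2 := by
  calc (∑ x, ∑ x', ∑ y, ∑ y', f x y * f x y' * f x' y * f x' y')
      = ∑ p : X × X, ∑ q : Y × Y, f p.1 q.1 * f p.1 q.2 * f p.2 q.1 * f p.2 q.2 := by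
        simp only [Fintype.sum_prod_type]
    _ = ∑ q : Y × Y, ∑ p : X × X, f p.1 q.1 * f p.1 q.2 * f p.2 q.1 * f p.2 q.2 :=
        Finset.sum_comm
    _ = ∑ q : Y × Y, (∑ x, f x q.1 * f x q.2) ^ 2 := by
        refine sum_congr rfl fun q _ => ?_
        rw [sq, Finset.sum_mul_sum, Fintype.sum_prod_type]
        exact sum_congr rfl fun x _ => sum_congr rfl fun x' _ => by ring

lemma boxNorm_nonneg {X Y : Type*} [Fintype X] [Fintype Y] (f : X → Y → ℝ) :
    0 ≤ boxNorm f := by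
  apply Real.rpow_nonneg
  apply div_nonneg
  · rw [boxNumer_eq]; exact Finset.sum_nonneg fun q _ => sq_nonneg _
  · positivity

lemma boxNorm_pow_four {X Y : Type*} [Fintype X] [Fintype Y] (f : X → Y → ℝ) :
    (boxNorm f) ^ (4 : ℕ) =
      (∑ q : Y × Y, (∑ x, f x q.1 * f x q.2) ^ 2) /
        ((Fintype.card X : ℝ) ^ 2 * (Fintype.card Y : ℝ) ^ 2) := by
  have h0 : (0:ℝ) ≤ (∑ x, ∑ x', ∑ y, ∑ y', f x y * f x y' * f x' y * f x' y') /
      ((Fintype.card X : ℝ) ^ 2 * (Fintype.card Y : ℝ) ^ 2) := by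
    apply div_nonneg
    · rw [boxNumer_eq]; exact Finset.sum_nonneg fun q _ => sq_nonneg _
    · positivity
  rw [boxNorm, ← Real.rpow_natCast (_ ^ ((1:ℝ)/4)) 4, ← Real.rpow_mul h0]
  norm_num
  rw [boxNumer_eq]

lemma key_count {X Y Z : Type*} [Fintype X] [Fintype Y] [Fintype Z]
    [Nonempty X] [Nonempty Y] [Nonempty Z]
    (g₁ : Y → Z → ℝ) (g₂ : X → Z → ℝ) (g₃ : X → Y → ℝ)
    (h₂ : ∀ x z, |g₂ x z| ≤ 1) (h₃ : ∀ x y, |g₃ x y| ≤ 1) :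
    |∑ x, ∑ y, ∑ z, g₁ y z * g₂ x z * g₃ x y| ≤
      boxNorm g₁ * ((Fintype.card X : ℝ) * (Fintype.card Y : ℝ) * (Fintype.card Z : ℝ)) := by
  set A := (Fintype.card X : ℝ) with hAdef
  set B := (Fintype.card Y : ℝ) with hBdef
  set C := (Fintype.card Z : ℝ) with hCdef
  have hA : 0 < A := by positivity
  have hB : 0 < B := by positivity
  have hC : 0 < C := by positivity
  set S := ∑ x, ∑ y, ∑ z, g₁ y z * g₂ x z * g₃ x y with hSdef
  set h : X → Y → ℝ := fun x y => ∑ z, g₁ y z * g₂ x z with hhdef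
  set W := ∑ p : X × Y, (h p.1 p.2) ^ 2 with hWdef
  set F : Z × Z → ℝ := fun q => ∑ y, g₁ y q.1 * g₁ y q.2 with hFdef
  set G : Z × Z → ℝ := fun q => ∑ x, g₂ x q.1 * g₂ x q.2 with hGdef
  set U := ∑ q : Z × Z, (F q) ^ 2 with hUdef
  have hWnn : 0 ≤ W := Finset.sum_nonneg fun p _ => sq_nonneg _
  have hUnn : 0 ≤ U := Finset.sum_nonneg fun q _ => sq_nonneg _
  -- Step 1: S² ≤ A*B*W
  have hS1 : S ^ 2 ≤ (A * B) * W := by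
    have hS : S = ∑ p : X × Y, h p.1 p.2 * g₃ p.1 p.2 := by
      rw [Fintype.sum_prod_type]
      refine sum_congr rfl fun x _ => sum_congr rfl fun y _ => ?_
      rw [hhdef, Finset.sum_mul]
    have cs := Finset.sum_mul_sq_le_sq_mul_sq Finset.univ
      (fun p : X × Y => g₃ p.1 p.2) (fun p : X × Y => h p.1 p.2)
    have hg3 : (∑ p : X × Y, (g₃ p.1 p.2) ^ 2) ≤ A * B := by
      calc (∑ p : X × Y, (g₃ p.1 p.2) ^ 2) ≤ ∑ _p : X × Y, (1:ℝ) := by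
            refine Finset.sum_le_sum fun p _ => ?_
            have := h₃ p.1 p.2
            nlinarith [abs_nonneg (g₃ p.1 p.2), sq_abs (g₃ p.1 p.2)]
        _ = A * B := by
            simp [hAdef, hBdef, Fintype.card_prod]
    calc S ^ 2 = (∑ p : X × Y, g₃ p.1 p.2 * h p.1 p.2) ^ 2 := by
          rw [hS]
          congr 1
          exact sum_congr rfl fun p _ => by ring
      _ ≤ (∑ p : X × Y, (g₃ p.1 p.2) ^ 2) * W := cs
      _ ≤ (A * B) * W := by
          exact mul_le_mul_of_nonneg_right hg3 hWnn
  -- Step 2: W = ∑ q, F q * G q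
  have hW2 : W = ∑ q : Z × Z, F q * G q := by
    calc W = ∑ p : X × Y, ∑ q : Z × Z,
          (g₁ p.2 q.1 * g₂ p.1 q.1) * (g₁ p.2 q.2 * g₂ p.1 q.2) := by
          refine sum_congr rfl fun p _ => ?_
          rw [sq, Finset.sum_mul_sum, Fintype.sum_prod_type]
      _ = ∑ q : Z × Z, ∑ p : X × Y,
          (g₁ p.2 q.1 * g₂ p.1 q.1) * (g₁ p.2 q.2 * g₂ p.1 q.2) := Finset.sum_comm
      _ = ∑ q : Z × Z, F q * G q := by
          refine sum_congr rfl fun q _ => ?_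
          rw [hFdef, hGdef, Finset.sum_mul_sum, Fintype.sum_prod_type]
          conv_lhs => rw [Finset.sum_comm]
          exact sum_congr rfl fun y _ => sum_congr rfl fun x _ => by ring
  -- Step 3: W² ≤ U * (C² * A²)
  have hG : ∀ q : Z × Z, |G q| ≤ A := by
    intro q
    calc |G q| ≤ ∑ x, |g₂ x q.1 * g₂ x q.2| := Finset.abs_sum_le_sum_abs _ _
      _ ≤ ∑ _x : X, (1:ℝ) := Finset.sum_le_sum fun x _ => by
            rw [abs_mul]
            exact mul_le_one₀ (h₂ x q.1) (abs_nonneg _) (h₂ x q.2)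
      _ = A := by simp [hAdef]
  have hS3 : W ^ 2 ≤ U * (C ^ 2 * A ^ 2) := by
    have cs := Finset.sum_mul_sq_le_sq_mul_sq Finset.univ F G
    have hGV : (∑ q : Z × Z, (G q) ^ 2) ≤ C ^ 2 * A ^ 2 := by
      calc (∑ q : Z × Z, (G q) ^ 2) ≤ ∑ _q : Z × Z, A ^ 2 :=
            Finset.sum_le_sum fun q _ => by
              nlinarith [hG q, abs_nonneg (G q), sq_abs (G q)]
        _ = C ^ 2 * A ^ 2 := by
            rw [Finset.sum_const, Finset.card_univ, Fintype.card_prod, nsmul_eq_mul, hCdef]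
            push_cast
            ring
    calc W ^ 2 = (∑ q : Z × Z, F q * G q) ^ 2 := by rw [hW2]
      _ ≤ U * ∑ q : Z × Z, (G q) ^ 2 := cs
      _ ≤ U * (C ^ 2 * A ^ 2) := mul_le_mul_of_nonneg_left hGV hUnn
  have hS4 : S ^ 4 ≤ U * (A ^ 4 * B ^ 2 * C ^ 2) := by
    calc S ^ 4 = (S ^ 2) ^ 2 := by ring
      _ ≤ ((A * B) * W) ^ 2 := pow_le_pow_left₀ (sq_nonneg S) hS1 2
      _ = (A * B) ^ 2 * W ^ 2 := by ring
      _ ≤ (A * B) ^ 2 * (U * (C ^ 2 * A ^ 2)) :=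
          mul_le_mul_of_nonneg_left hS3 (by positivity)
      _ = U * (A ^ 4 * B ^ 2 * C ^ 2) := by ring
  have hbox4 : (boxNorm g₁ * (A * B * C)) ^ 4 = U * (A ^ 4 * B ^ 2 * C ^ 2) := by
    have h4 := boxNorm_pow_four g₁
    rw [mul_pow, h4, hUdef]
    simp only [hFdef, hBdef, hCdef]
    field_simp
  have hfin : |S| ^ 4 ≤ (boxNorm g₁ * (A * B * C)) ^ 4 := by
    rw [hbox4, ← abs_pow, abs_of_nonneg (by positivity : (0:ℝ) ≤ S ^ 4)]
    exact hS4
  exact le_of_pow_le_pow_left₀ (by norm_num) (mul_nonneg (boxNorm_nonneg g₁) (by positivity)) hfin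

lemma key_avg {X Y Z : Type*} [Fintype X] [Fintype Y] [Fintype Z]
    [Nonempty X] [Nonempty Y] [Nonempty Z]
    (g₁ : Y → Z → ℝ) (g₂ : X → Z → ℝ) (g₃ : X → Y → ℝ)
    (h₂ : ∀ x z, |g₂ x z| ≤ 1) (h₃ : ∀ x y, |g₃ x y| ≤ 1) :
    |(∑ x, ∑ y, ∑ z, g₁ y z * g₂ x z * g₃ x y) /
        ((Fintype.card X : ℝ) * (Fintype.card Y : ℝ) * (Fintype.card Z : ℝ))| ≤
      boxNorm g₁ := by
  have hD : (0:ℝ) < (Fintype.card X : ℝ) * (Fintype.card Y : ℝ) * (Fintype.card Z : ℝ) := by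
    positivity
  rw [abs_div, abs_of_pos hD, div_le_iff₀ hD]
  exact key_count g₁ g₂ g₃ h₂ h₃

lemma sum_rot {α β γ : Type*} [Fintype α] [Fintype β] [Fintype γ] (f : α → β → γ → ℝ) :
    ∑ a, ∑ b, ∑ c, f a b c = ∑ c, ∑ a, ∑ b, f a b c := by
  calc ∑ a, ∑ b, ∑ c, f a b c = ∑ a, ∑ c, ∑ b, f a b c :=
        Finset.sum_congr rfl fun a _ => Finset.sum_comm
    _ = ∑ c, ∑ a, ∑ b, f a b c := Finset.sum_comm

lemma abs_add₇ (a b c d e f g : ℝ) :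
    |a + b + c + d + e + f + g| ≤ |a| + |b| + |c| + |d| + |e| + |f| + |g| := by
  calc |a + b + c + d + e + f + g| ≤ |a + b + c + d + e + f| + |g| := abs_add_le _ _
    _ ≤ (|a + b + c + d + e| + |f|) + |g| := by gcongr; exact abs_add_le _ _
    _ ≤ ((|a + b + c + d| + |e|) + |f|) + |g| := by gcongr; exact abs_add_le _ _
    _ ≤ (((|a + b + c| + |d|) + |e|) + |f|) + |g| := by gcongr; exact abs_add_le _ _
    _ ≤ ((((|a + b| + |c|) + |d|) + |e|) + |f|) + |g| := by gcongr; exact abs_add_le _ _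
    _ ≤ (((((|a| + |b|) + |c|) + |d|) + |e|) + |f|) + |g| := by gcongr; exact abs_add_le _ _
    _ = |a| + |b| + |c| + |d| + |e| + |f| + |g| := by ring

/-- Uniform sets behave randomly for the two-dimensional corner-counting product: the
trilinear count for `S₁ ⊆ Y × Z`, `S₂ ⊆ X × Z`, `S₃ ⊆ X × Y` differs from the product of
densities by at most `8` times the largest box norm of the balanced indicator functions. -/
theorem uniform_product_count {X Y Z : Type*} [Fintype X] [Fintype Y] [Fintype Z]
    [Nonempty X] [Nonempty Y] [Nonempty Z]
    [DecidableEq X] [DecidableEq Y] [DecidableEq Z]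
    (S₁ : Finset (Y × Z)) (S₂ : Finset (X × Z)) (S₃ : Finset (X × Y)) :
    |(∑ x, ∑ y, ∑ z,
          (if (y, z) ∈ S₁ then (1 : ℝ) else 0) * (if (x, z) ∈ S₂ then (1 : ℝ) else 0) *
            (if (x, y) ∈ S₃ then (1 : ℝ) else 0)) /
        ((Fintype.card X : ℝ) * (Fintype.card Y : ℝ) * (Fintype.card Z : ℝ)) -
      ((S₁.card : ℝ) / ((Fintype.card Y : ℝ) * (Fintype.card Z : ℝ))) *
        ((S₂.card : ℝ) / ((Fintype.card X : ℝ) * (Fintype.card Z : ℝ))) *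
        ((S₃.card : ℝ) / ((Fintype.card X : ℝ) * (Fintype.card Y : ℝ)))| ≤
    8 * max (max
        (boxNorm (fun y z => (if (y, z) ∈ S₁ then (1 : ℝ) else 0) -
          (S₁.card : ℝ) / ((Fintype.card Y : ℝ) * (Fintype.card Z : ℝ))))
        (boxNorm (fun x z => (if (x, z) ∈ S₂ then (1 : ℝ) else 0) -
          (S₂.card : ℝ) / ((Fintype.card X : ℝ) * (Fintype.card Z : ℝ)))))
        (boxNorm (fun x y => (if (x, y) ∈ S₃ then (1 : ℝ) else 0) -
          (S₃.card : ℝ) / ((Fintype.card X : ℝ) * (Fintype.card Y : ℝ)))) := by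
  set p₁ := (S₁.card : ℝ) / ((Fintype.card Y : ℝ) * (Fintype.card Z : ℝ)) with hp₁def
  set p₂ := (S₂.card : ℝ) / ((Fintype.card X : ℝ) * (Fintype.card Z : ℝ)) with hp₂def
  set p₃ := (S₃.card : ℝ) / ((Fintype.card X : ℝ) * (Fintype.card Y : ℝ)) with hp₃def
  set f₁ : Y → Z → ℝ := fun y z => (if (y, z) ∈ S₁ then (1 : ℝ) else 0) - p₁ with hf₁def
  set f₂ : X → Z → ℝ := fun x z => (if (x, z) ∈ S₂ then (1 : ℝ) else 0) - p₂ with hf₂def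
  set f₃ : X → Y → ℝ := fun x y => (if (x, y) ∈ S₃ then (1 : ℝ) else 0) - p₃ with hf₃def
  set D := (Fintype.card X : ℝ) * (Fintype.card Y : ℝ) * (Fintype.card Z : ℝ) with hDdef
  have hD : (0:ℝ) < D := by rw [hDdef]; positivity
  -- density bounds
  have hp₁0 : 0 ≤ p₁ := by rw [hp₁def]; positivity
  have hp₂0 : 0 ≤ p₂ := by rw [hp₂def]; positivity
  have hp₃0 : 0 ≤ p₃ := by rw [hp₃def]; positivity
  have hp₁1 : p₁ ≤ 1 := by
    rw [hp₁def, div_le_one (by positivity)]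
    calc (S₁.card : ℝ) ≤ (Fintype.card (Y × Z) : ℝ) := by
          exact_mod_cast Finset.card_le_univ S₁
      _ = _ := by rw [Fintype.card_prod]; push_cast; ring
  have hp₂1 : p₂ ≤ 1 := by
    rw [hp₂def, div_le_one (by positivity)]
    calc (S₂.card : ℝ) ≤ (Fintype.card (X × Z) : ℝ) := by
          exact_mod_cast Finset.card_le_univ S₂
      _ = _ := by rw [Fintype.card_prod]; push_cast; ring
  have hp₃1 : p₃ ≤ 1 := by
    rw [hp₃def, div_le_one (by positivity)]
    calc (S₃.card : ℝ) ≤ (Fintype.card (X × Y) : ℝ) := by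
          exact_mod_cast Finset.card_le_univ S₃
      _ = _ := by rw [Fintype.card_prod]; push_cast; ring
  have hf₁b : ∀ y z, |f₁ y z| ≤ 1 := by
    intro y z
    by_cases h : (y, z) ∈ S₁ <;> simp only [hf₁def, h, if_true, if_false] <;>
      rw [abs_le] <;> constructor <;> simp <;> linarith
  have hf₂b : ∀ x z, |f₂ x z| ≤ 1 := by
    intro x z
    by_cases h : (x, z) ∈ S₂ <;> simp only [hf₂def, h, if_true, if_false] <;>
      rw [abs_le] <;> constructor <;> simp <;> linarith
  have hf₃b : ∀ x y, |f₃ x y| ≤ 1 := by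
    intro x y
    by_cases h : (x, y) ∈ S₃ <;> simp only [hf₃def, h, if_true, if_false] <;>
      rw [abs_le] <;> constructor <;> simp <;> linarith
  have hp₁b : |p₁| ≤ 1 := by rw [abs_le]; constructor <;> linarith
  have hp₂b : |p₂| ≤ 1 := by rw [abs_le]; constructor <;> linarith
  have hp₃b : |p₃| ≤ 1 := by rw [abs_le]; constructor <;> linarith
  -- expansion
  have expand : (∑ x, ∑ y, ∑ z,
        (if (y, z) ∈ S₁ then (1 : ℝ) else 0) * (if (x, z) ∈ S₂ then (1 : ℝ) else 0) *
          (if (x, y) ∈ S₃ then (1 : ℝ) else 0))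
      = (∑ x : X, ∑ y : Y, ∑ z : Z, f₁ y z * f₂ x z * f₃ x y)
      + (∑ x : X, ∑ y : Y, ∑ z : Z, f₁ y z * f₂ x z * p₃)
      + (∑ x : X, ∑ y : Y, ∑ z : Z, f₁ y z * p₂ * f₃ x y)
      + (∑ x : X, ∑ y : Y, ∑ z : Z, p₁ * f₂ x z * f₃ x y)
      + (∑ x : X, ∑ y : Y, ∑ z : Z, f₁ y z * p₂ * p₃)
      + (∑ x : X, ∑ y : Y, ∑ z : Z, p₁ * f₂ x z * p₃)
      + (∑ x : X, ∑ y : Y, ∑ z : Z, p₁ * p₂ * f₃ x y)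
      + D * (p₁ * p₂ * p₃) := by
    have hconst : D * (p₁ * p₂ * p₃) = ∑ _x : X, ∑ _y : Y, ∑ _z : Z, p₁ * p₂ * p₃ := by
      simp only [Finset.sum_const, Finset.card_univ, nsmul_eq_mul, hDdef]
      ring
    rw [hconst]
    simp only [← Finset.sum_add_distrib]
    refine Finset.sum_congr rfl fun x _ => Finset.sum_congr rfl fun y _ =>
      Finset.sum_congr rfl fun z _ => ?_
    simp only [hf₁def, hf₂def, hf₃def]
    ring
  -- rewrite the LHS as a sum of seven averaged terms
  have hLHS : (∑ x, ∑ y, ∑ z,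
        (if (y, z) ∈ S₁ then (1 : ℝ) else 0) * (if (x, z) ∈ S₂ then (1 : ℝ) else 0) *
          (if (x, y) ∈ S₃ then (1 : ℝ) else 0)) / D - p₁ * p₂ * p₃
      = (∑ x : X, ∑ y : Y, ∑ z : Z, f₁ y z * f₂ x z * f₃ x y) / D
      + (∑ x : X, ∑ y : Y, ∑ z : Z, f₁ y z * f₂ x z * p₃) / D
      + (∑ x : X, ∑ y : Y, ∑ z : Z, f₁ y z * p₂ * f₃ x y) / D
      + (∑ x : X, ∑ y : Y, ∑ z : Z, p₁ * f₂ x z * f₃ x y) / D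
      + (∑ x : X, ∑ y : Y, ∑ z : Z, f₁ y z * p₂ * p₃) / D
      + (∑ x : X, ∑ y : Y, ∑ z : Z, p₁ * f₂ x z * p₃) / D
      + (∑ x : X, ∑ y : Y, ∑ z : Z, p₁ * p₂ * f₃ x y) / D := by
    rw [expand]
    simp only [add_div]
    rw [mul_div_cancel_left₀ _ hD.ne']
    ring
  rw [hLHS]
  -- the seven bounds
  set M := max (max (boxNorm f₁) (boxNorm f₂)) (boxNorm f₃) with hMdef
  have hM1 : boxNorm f₁ ≤ M := le_trans (le_max_left _ _) (le_max_left _ _)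
  have hM2 : boxNorm f₂ ≤ M := le_trans (le_max_right _ _) (le_max_left _ _)
  have hM3 : boxNorm f₃ ≤ M := le_max_right _ _
  have hM0 : 0 ≤ M := le_trans (boxNorm_nonneg f₃) hM3
  have b₁ : |(∑ x : X, ∑ y : Y, ∑ z : Z, f₁ y z * f₂ x z * f₃ x y) / D| ≤ M :=
    le_trans (key_avg f₁ f₂ f₃ hf₂b hf₃b) hM1
  have b₂ : |(∑ x : X, ∑ y : Y, ∑ z : Z, f₁ y z * f₂ x z * p₃) / D| ≤ M :=
    le_trans (key_avg f₁ f₂ (fun _ _ => p₃) hf₂b (fun _ _ => hp₃b)) hM1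
  have b₃ : |(∑ x : X, ∑ y : Y, ∑ z : Z, f₁ y z * p₂ * f₃ x y) / D| ≤ M :=
    le_trans (key_avg f₁ (fun _ _ => p₂) f₃ (fun _ _ => hp₂b) hf₃b) hM1
  have b₅ : |(∑ x : X, ∑ y : Y, ∑ z : Z, f₁ y z * p₂ * p₃) / D| ≤ M :=
    le_trans (key_avg f₁ (fun _ _ => p₂) (fun _ _ => p₃) (fun _ _ => hp₂b)
      (fun _ _ => hp₃b)) hM1
  have b₄ : |(∑ x : X, ∑ y : Y, ∑ z : Z, p₁ * f₂ x z * f₃ x y) / D| ≤ M := by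
    have h := key_avg (X := Y) (Y := X) (Z := Z) f₂ (fun _ _ => p₁) (fun y x => f₃ x y)
      (fun _ _ => hp₁b) (fun y x => hf₃b x y)
    have hsum : (∑ x : X, ∑ y : Y, ∑ z : Z, p₁ * f₂ x z * f₃ x y)
        = ∑ y : Y, ∑ x : X, ∑ z : Z, f₂ x z * p₁ * f₃ x y := by
      rw [Finset.sum_comm]
      exact Finset.sum_congr rfl fun y _ => Finset.sum_congr rfl fun x _ =>
        Finset.sum_congr rfl fun z _ => by ring
    have hdiv : ((Fintype.card Y : ℝ) * (Fintype.card X : ℝ) * (Fintype.card Z : ℝ)) = D := by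
      rw [hDdef]; ring
    rw [hsum, ← hdiv]
    exact le_trans h hM2
  have b₆ : |(∑ x : X, ∑ y : Y, ∑ z : Z, p₁ * f₂ x z * p₃) / D| ≤ M := by
    have h := key_avg (X := Y) (Y := X) (Z := Z) f₂ (fun _ _ => p₁)
      (fun _ _ => p₃) (fun _ _ => hp₁b) (fun _ _ => hp₃b)
    have hsum : (∑ x : X, ∑ y : Y, ∑ z : Z, p₁ * f₂ x z * p₃)
        = ∑ y : Y, ∑ x : X, ∑ z : Z, f₂ x z * p₁ * p₃ := by
      rw [Finset.sum_comm]
      exact Finset.sum_congr rfl fun y _ => Finset.sum_congr rfl fun x _ =>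
        Finset.sum_congr rfl fun z _ => by ring
    have hdiv : ((Fintype.card Y : ℝ) * (Fintype.card X : ℝ) * (Fintype.card Z : ℝ)) = D := by
      rw [hDdef]; ring
    rw [hsum, ← hdiv]
    exact le_trans h hM2
  have b₇ : |(∑ x : X, ∑ y : Y, ∑ z : Z, p₁ * p₂ * f₃ x y) / D| ≤ M := by
    have h := key_avg (X := Z) (Y := X) (Z := Y) f₃ (fun _ _ => p₁)
      (fun _ _ => p₂) (fun _ _ => hp₁b) (fun _ _ => hp₂b)
    have hsum : (∑ x : X, ∑ y : Y, ∑ z : Z, p₁ * p₂ * f₃ x y)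
        = ∑ z : Z, ∑ x : X, ∑ y : Y, f₃ x y * p₁ * p₂ := by
      rw [sum_rot]
      exact Finset.sum_congr rfl fun z _ => Finset.sum_congr rfl fun x _ =>
        Finset.sum_congr rfl fun y _ => by ring
    have hdiv : ((Fintype.card Z : ℝ) * (Fintype.card X : ℝ) * (Fintype.card Y : ℝ)) = D := by
      rw [hDdef]; ring
    rw [hsum, ← hdiv]
    exact le_trans h hM3
  calc |_ + _ + _ + _ + _ + _ + _| ≤ _ := abs_add₇ _ _ _ _ _ _ _
    _ ≤ 8 * M := by linarith
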